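/- Let $1 \le n \le l$ be integers and $v_1,\dots,v_n$ be real numbers. There exists a random variable $N$ taking values in $\{0,1,\dots,l\}$ with $E[N^k] = v_k$ for $k=1,\dots,n$ if and only if $c_0 + \sum_{i=1}^n c_i v_i \ge 0$ for every polynomial $P(x) = \sum_{i=0}^n c_i x^i$ of degree $n$ that has $n$ simple roots in $\{0,\dots,l\}$ and is nonnegative on $\{0,\dots,l\}$. -/

import Mathlib

open MeasureTheory Polynomial

noncomputable def pair10 (n : ℕ) (v : ℕ → ℝ) (P : ℝ[X]) : ℝ :=
  P.coeff 0 + ∑ i ∈ Finset.Icc 1 n, P.coeff i * v i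

noncomputable def zf10 (l : ℕ) (c : ℝ[X]) : Finset ℕ :=
  (Finset.range (l+1)).filter (fun m => c.eval (m:ℝ) = 0)

lemma pair10_zero (n v) : pair10 n v 0 = 0 := by simp [pair10]

lemma pair10_neg (n v) (P : ℝ[X]) : pair10 n v (-P) = - pair10 n v P := by
  simp only [pair10, coeff_neg, neg_add, ← Finset.sum_neg_distrib]
  congr 1
  exact Finset.sum_congr rfl (fun i _ => by ring)

lemma pair10_add_smul (n v) (P Q : ℝ[X]) (t : ℝ) :
    pair10 n v (P + C t * Q) = pair10 n v P + t * pair10 n v Q := by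
  simp only [pair10, coeff_add, coeff_C_mul]
  have h : ∑ i ∈ Finset.Icc 1 n, (P.coeff i + t * Q.coeff i) * v i
      = (∑ i ∈ Finset.Icc 1 n, P.coeff i * v i) + t * ∑ i ∈ Finset.Icc 1 n, Q.coeff i * v i := by
    rw [Finset.mul_sum, ← Finset.sum_add_distrib]
    exact Finset.sum_congr rfl (fun i _ => by ring)
  rw [h]; ring

lemma mem_zf10 {l : ℕ} {c : ℝ[X]} {m : ℕ} :
    m ∈ zf10 l c ↔ m ≤ l ∧ c.eval (m:ℝ) = 0 := by
  simp [zf10, Nat.lt_succ_iff]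

lemma zf10_val_le_roots {l : ℕ} {c : ℝ[X]} (hc : c ≠ 0) :
    ((zf10 l c).val.map (fun m : ℕ => (m:ℝ))) ≤ c.roots := by
  rw [Multiset.le_iff_count]
  intro a
  have hnd : ((zf10 l c).val.map (fun m : ℕ => (m:ℝ))).Nodup :=
    (zf10 l c).nodup.map Nat.cast_injective
  by_cases ha : a ∈ (zf10 l c).val.map (fun m : ℕ => (m:ℝ))
  · have h1 := Multiset.count_eq_one_of_mem hnd ha
    rw [h1, count_roots]
    obtain ⟨m, hm, rfl⟩ := Multiset.mem_map.1 ha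
    exact (rootMultiplicity_pos hc).2 (mem_zf10.1 hm).2
  · simp [Multiset.count_eq_zero_of_notMem ha]

lemma zf10_card_le {n l : ℕ} {c : ℝ[X]} (hc : c ≠ 0) (hdeg : c.natDegree ≤ n) :
    (zf10 l c).card ≤ n := by
  have := Multiset.card_le_card (zf10_val_le_roots (l := l) hc)
  simp only [Multiset.card_map] at this
  exact le_trans (le_trans (le_of_eq rfl) this) (le_trans c.card_roots' hdeg)

lemma ndeg_prod10 (Zr : Multiset ℝ) :
    (Multiset.map (fun a => X - C a) Zr).prod.natDegree = Multiset.card Zr := by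
  rw [natDegree_multiset_prod_of_monic]
  · simp [Multiset.map_map, Function.comp]
  · intro f hf; obtain ⟨a, _, rfl⟩ := Multiset.mem_map.1 hf; exact monic_X_sub_C a

-- the special case lemma
lemma special10 (n l : ℕ) (v : ℕ → ℝ)
    (hRHS : ∀ P : Polynomial ℝ, P.natDegree = n →
          (∃ S : Finset ℕ, S ⊆ Finset.range (l + 1) ∧ S.card = n ∧
            P.roots = S.val.map (fun i => (i : ℝ))) →
          (∀ i ≤ l, 0 ≤ P.eval (i : ℝ)) →
          0 ≤ P.coeff 0 + ∑ i ∈ Finset.Icc 1 n, P.coeff i * v i)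
    (c : ℝ[X]) (hdeg : c.natDegree ≤ n) (hpos : ∀ m ≤ l, 0 ≤ c.eval (m:ℝ))
    (hcard : n ≤ (zf10 l c).card) (hpair : pair10 n v c < 0) : False := by
  have hc : c ≠ 0 := by
    rintro rfl
    simp [pair10] at hpair
  have hcard' : (zf10 l c).card = n := le_antisymm (zf10_card_le hc hdeg) hcard
  set Zr : Multiset ℝ := (zf10 l c).val.map (fun m : ℕ => (m:ℝ)) with hZr
  have hle : Zr ≤ c.roots := zf10_val_le_roots hc
  have hdvd : (Multiset.map (fun a => X - C a) Zr).prod ∣ c :=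
    dvd_trans (Multiset.prod_dvd_prod_of_le (Multiset.map_le_map hle)) (prod_multiset_X_sub_C_dvd c)
  obtain ⟨q, hq⟩ := hdvd
  have hp1monic : (Multiset.map (fun a => X - C a) Zr).prod.Monic :=
    monic_multiset_prod_of_monic Zr (fun a => X - C a) (fun a _ => monic_X_sub_C a)
  have hp1deg : (Multiset.map (fun a => X - C a) Zr).prod.natDegree = n := by
    rw [ndeg_prod10]
    simp [hZr, hcard']
  have hq0 : q ≠ 0 := by rintro rfl; simp [hq] at hc
  have hqdeg : q.natDegree = 0 := by
    have := natDegree_mul (hp1monic.ne_zero) hq0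
    rw [← hq] at this
    omega
  obtain ⟨a, rfl⟩ : ∃ a, q = C a := ⟨q.coeff 0, eq_C_of_natDegree_eq_zero hqdeg⟩
  have ha : a ≠ 0 := fun h => hq0 (by simp [h])
  have hcdeg : c.natDegree = n := by
    rw [hq, natDegree_mul hp1monic.ne_zero hq0, hqdeg, hp1deg, add_zero]
  have hroots : c.roots = Zr := by
    rw [hq, roots_mul (hq ▸ hc), roots_multiset_prod_X_sub_C, roots_C, add_zero]
  have hroots' : c.roots = (zf10 l c).val.map (fun i => (i : ℝ)) := by
    rw [hroots, hZr]; simp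
  have := hRHS c hcdeg ⟨zf10 l c, Finset.filter_subset _ _, hcard', hroots'⟩ hpos
  exact absurd hpair (not_lt.2 this)

-- subtraction step
lemma step10 (n l : ℕ) (v : ℕ → ℝ) (c e : ℝ[X])
    (hcdeg : c.natDegree ≤ n) (hedeg : e.natDegree ≤ n)
    (hcpos : ∀ m ≤ l, 0 ≤ c.eval (m:ℝ))
    (hevan : ∀ m ∈ zf10 l c, e.eval (m:ℝ) = 0)
    (hneg : ∃ m ≤ l, e.eval (m:ℝ) < 0)
    (hpe : pair10 n v e ≤ 0) (hpc : pair10 n v c < 0) :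
    ∃ c' : ℝ[X], c'.natDegree ≤ n ∧ (∀ m ≤ l, 0 ≤ c'.eval (m:ℝ)) ∧
      pair10 n v c' < 0 ∧ (zf10 l c).card + 1 ≤ (zf10 l c').card := by
  classical
  set B : Finset ℕ := (Finset.range (l+1)).filter (fun m => e.eval (m:ℝ) < 0) with hB
  have hBne : B.Nonempty := by
    obtain ⟨m, hm, hm2⟩ := hneg
    exact ⟨m, by simp [hB, Nat.lt_succ_iff, hm, hm2]⟩
  have hmemB : ∀ m ∈ B, m ≤ l ∧ e.eval (m:ℝ) < 0 := by
    intro m hm; simpa [hB, Nat.lt_succ_iff] using hm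
  -- c is strictly positive on B
  have hcB : ∀ m ∈ B, 0 < c.eval (m:ℝ) := by
    intro m hm
    obtain ⟨hml, hme⟩ := hmemB m hm
    rcases lt_or_eq_of_le (hcpos m hml) with h | h
    · exact h
    · exact absurd (hevan m (mem_zf10.2 ⟨hml, h.symm⟩)) (ne_of_lt hme)
  set r : ℕ → ℝ := fun m => c.eval (m:ℝ) / (-(e.eval (m:ℝ))) with hr
  set t : ℝ := B.inf' hBne r with ht
  obtain ⟨m₀, hm₀B, hm₀⟩ := Finset.exists_mem_eq_inf' hBne r
  have ht0 : 0 ≤ t := by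
    rw [ht, hm₀]
    exact le_of_lt (div_pos (hcB m₀ hm₀B) (by linarith [(hmemB m₀ hm₀B).2]))
  refine ⟨c + C t * e, ?_, ?_, ?_, ?_⟩
  · exact le_trans (natDegree_add_le _ _) (by
      simp only [sup_le_iff]
      exact ⟨hcdeg, le_trans (natDegree_C_mul_le t e) hedeg⟩)
  · intro m hml
    simp only [eval_add, eval_mul, eval_C]
    rcases lt_or_ge (e.eval (m:ℝ)) 0 with hme | hme
    · have hmB : m ∈ B := by simp [hB, Nat.lt_succ_iff, hml, hme]
      have : t ≤ r m := Finset.inf'_le r hmB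
      have h2 : t * (-(e.eval (m:ℝ))) ≤ c.eval (m:ℝ) := by
        rw [hr] at this
        calc t * (-(e.eval (m:ℝ))) ≤ (c.eval (m:ℝ) / (-(e.eval (m:ℝ)))) * (-(e.eval (m:ℝ))) := by
              apply mul_le_mul_of_nonneg_right this (by linarith)
          _ = c.eval (m:ℝ) := div_mul_cancel₀ _ (by linarith)
      linarith
    · have := hcpos m hml
      nlinarith
  · rw [pair10_add_smul]
    nlinarith
  · have hsub : insert m₀ (zf10 l c) ⊆ zf10 l (c + C t * e) := by
      intro m hm
      rcases Finset.mem_insert.1 hm with h | hm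
      · subst h
        refine mem_zf10.2 ⟨(hmemB _ hm₀B).1, ?_⟩
        simp only [eval_add, eval_mul, eval_C]
        rw [ht, hm₀, hr]
        have hlt : (0:ℝ) < -(e.eval (m:ℝ)) := by linarith [(hmemB _ hm₀B).2]
        have hx : (c.eval (m:ℝ) / (-(e.eval (m:ℝ)))) * e.eval (m:ℝ) = - c.eval (m:ℝ) := by
          field_simp
          rw [mul_div_assoc, div_self (ne_of_lt (by linarith) : e.eval (m:ℝ) ≠ 0), mul_one]
        simp only [hx]
        ring
      · obtain ⟨hml, hmc⟩ := mem_zf10.1 hm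
        refine mem_zf10.2 ⟨hml, ?_⟩
        simp [eval_add, eval_mul, eval_C, hmc, hevan m (mem_zf10.2 ⟨hml, hmc⟩)]
    have hnotin : m₀ ∉ zf10 l c := by
      intro h
      exact absurd (hevan m₀ h) (ne_of_lt (hmemB m₀ hm₀B).2)
    calc (zf10 l c).card + 1 = (insert m₀ (zf10 l c)).card := (Finset.card_insert_of_notMem hnotin).symm
      _ ≤ (zf10 l (c + C t * e)).card := Finset.card_le_card hsub

lemma zf10_neg {l : ℕ} (d : ℝ[X]) : zf10 l (-d) = zf10 l d := by
  ext m; simp [mem_zf10]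

lemma main10 (n l : ℕ) (hn : 1 ≤ n) (hnl : n ≤ l) (v : ℕ → ℝ)
    (hRHS : ∀ P : Polynomial ℝ, P.natDegree = n →
          (∃ S : Finset ℕ, S ⊆ Finset.range (l + 1) ∧ S.card = n ∧
            P.roots = S.val.map (fun i => (i : ℝ))) →
          (∀ i ≤ l, 0 ≤ P.eval (i : ℝ)) →
          0 ≤ P.coeff 0 + ∑ i ∈ Finset.Icc 1 n, P.coeff i * v i) :
    ∀ k : ℕ, ∀ c : ℝ[X], c.natDegree ≤ n → (∀ m ≤ l, 0 ≤ c.eval (m:ℝ)) →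
      pair10 n v c < 0 → n ≤ k + (zf10 l c).card → False := by
  intro k
  induction k with
  | zero =>
    intro c h1 h2 h3 h4
    exact special10 n l v hRHS c h1 h2 (by simpa using h4) h3
  | succ k ih =>
    intro c hdeg hpos hpair hk
    by_cases hZn : n ≤ (zf10 l c).card
    · exact special10 n l v hRHS c hdeg hpos hZn hpair
    push_neg at hZn
    obtain ⟨α, hαr, hαZ⟩ : ∃ α, α ∈ Finset.range (l+1) ∧ α ∉ zf10 l c := by
      by_contra h; push_neg at h
      have hsub : Finset.range (l+1) ⊆ zf10 l c := fun x hx => h x hx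
      have := Finset.card_le_card hsub
      simp only [Finset.card_range] at this
      omega
    set Zα : Finset ℕ := insert α (zf10 l c) with hZα
    set d : ℝ[X] := ∏ m ∈ Zα, (X - C (m:ℝ)) with hd
    have hZαsub : Zα ⊆ Finset.range (l+1) := by
      intro x hx
      rcases Finset.mem_insert.1 hx with rfl | hx
      · exact hαr
      · exact Finset.filter_subset _ _ hx
    have hZαcard : Zα.card = (zf10 l c).card + 1 := Finset.card_insert_of_notMem hαZ
    have hdeval : ∀ j : ℕ, d.eval (j:ℝ) = ∏ m ∈ Zα, ((j:ℝ) - (m:ℝ)) := by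
      intro j
      rw [hd, eval_prod]
      exact Finset.prod_congr rfl (fun m _ => by simp)
    have hdzero : ∀ j : ℕ, (d.eval (j:ℝ) = 0 ↔ j ∈ Zα) := by
      intro j
      rw [hdeval]
      rw [Finset.prod_eq_zero_iff]
      constructor
      · rintro ⟨m, hm, hm2⟩
        have : (j:ℝ) = (m:ℝ) := by linarith [sub_eq_zero.1 hm2]
        exact (Nat.cast_injective this) ▸ hm
      · intro hj
        exact ⟨j, hj, by ring⟩
    have hdZ : zf10 l d = Zα := by
      ext j
      rw [mem_zf10, hdzero]
      constructor
      · exact fun h => h.2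
      · intro h
        exact ⟨Nat.lt_succ_iff.1 (Finset.mem_range.1 (hZαsub h)), h⟩
    have hddeg : d.natDegree ≤ n := by
      have h0 := natDegree_prod (ι := ℕ) (R := ℝ) Zα (fun m => X - C (m:ℝ))
        (fun m _ => X_sub_C_ne_zero (m:ℝ))
      have h1 : ∑ x ∈ Zα, ((fun m : ℕ => X - C (m:ℝ)) x).natDegree = ∑ _x ∈ Zα, 1 :=
        Finset.sum_congr rfl (fun x _ => natDegree_X_sub_C _)
      have : d.natDegree = Zα.card := by
        rw [hd, h0, h1]
        simp
      omega
    have hdvan : ∀ m ∈ zf10 l c, d.eval (m:ℝ) = 0 :=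
      fun m hm => (hdzero m).2 (Finset.mem_insert_of_mem hm)
    obtain ⟨β, hβl, hβ⟩ : ∃ β ≤ l, d.eval (β:ℝ) ≠ 0 := by
      obtain ⟨β, hβr, hβZ⟩ : ∃ β, β ∈ Finset.range (l+1) ∧ β ∉ Zα := by
        by_contra h; push_neg at h
        have hsub : Finset.range (l+1) ⊆ Zα := fun x hx => h x hx
        have := Finset.card_le_card hsub
        simp only [Finset.card_range] at this
        omega
      exact ⟨β, Nat.lt_succ_iff.1 (Finset.mem_range.1 hβr), fun h => hβZ ((hdzero β).1 h)⟩
    have hrec : ∀ c' : ℝ[X], c'.natDegree ≤ n → (∀ m ≤ l, 0 ≤ c'.eval (m:ℝ)) →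
        pair10 n v c' < 0 → (zf10 l c).card + 1 ≤ (zf10 l c').card → False := by
      intro c' h1 h2 h3 h4
      exact ih c' h1 h2 h3 (by omega)
    by_cases hd1 : ∀ m ≤ l, 0 ≤ d.eval (m:ℝ)
    · by_cases hd2 : pair10 n v d < 0
      · exact hrec d hddeg hd1 hd2 (by rw [hdZ]; omega)
      · push_neg at hd2
        obtain ⟨c', h1, h2, h3, h4⟩ := step10 n l v c (-d) hdeg
          (by simpa using hddeg) hpos (fun m hm => by simp [hdvan m hm])
          ⟨β, hβl, by simpa using lt_of_le_of_ne (hd1 β hβl) (Ne.symm hβ)⟩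
          (by rw [pair10_neg]; linarith) hpair
        exact hrec c' h1 h2 h3 h4
    · push_neg at hd1
      by_cases hd3 : pair10 n v d ≤ 0
      · obtain ⟨c', h1, h2, h3, h4⟩ := step10 n l v c d hdeg hddeg hpos hdvan
          (by obtain ⟨m, hm1, hm2⟩ := hd1; exact ⟨m, hm1, hm2⟩) hd3 hpair
        exact hrec c' h1 h2 h3 h4
      · push_neg at hd3
        by_cases hd4 : ∀ m ≤ l, 0 ≤ (-d).eval (m:ℝ)
        · refine hrec (-d) (by simpa using hddeg) hd4 (by rw [pair10_neg]; linarith) ?_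
          rw [zf10_neg, hdZ]; omega
        · push_neg at hd4
          obtain ⟨m₁, hm₁, hm₂⟩ := hd4
          obtain ⟨c', h1, h2, h3, h4⟩ := step10 n l v c (-d) hdeg
            (by simpa using hddeg) hpos (fun m hm => by simp [hdvan m hm])
            ⟨m₁, hm₁, hm₂⟩ (by rw [pair10_neg]; linarith) hpair
          exact hrec c' h1 h2 h3 h4

noncomputable def xv10 (n : ℕ) (m : ℕ) : Fin n → ℝ := fun i => (m:ℝ)^((i:ℕ)+1)

-- reindexing sum over Icc 1 n vs Fin n
lemma icc_sum10 (n : ℕ) (F : ℕ → ℝ) :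
    ∑ k ∈ Finset.Icc 1 n, F k = ∑ i : Fin n, F ((i:ℕ)+1) := by
  rw [Fin.sum_univ_eq_sum_range (fun j => F (j+1)) n]
  apply Finset.sum_nbij' (i := fun k => k - 1) (j := fun j => j + 1) <;>
    intros <;> simp_all <;> omega


lemma sep10 (n l : ℕ) (hn : 1 ≤ n) (hnl : n ≤ l) (v : ℕ → ℝ)
    (hRHS : ∀ P : Polynomial ℝ, P.natDegree = n →
          (∃ S : Finset ℕ, S ⊆ Finset.range (l + 1) ∧ S.card = n ∧
            P.roots = S.val.map (fun i => (i : ℝ))) →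
          (∀ i ≤ l, 0 ≤ P.eval (i : ℝ)) →
          0 ≤ P.coeff 0 + ∑ i ∈ Finset.Icc 1 n, P.coeff i * v i) :
    (fun i : Fin n => v ((i:ℕ)+1)) ∈
      convexHull ℝ (((Finset.range (l+1)).image (xv10 n) : Finset (Fin n → ℝ)) : Set (Fin n → ℝ)) := by
  classical
  by_contra hmem
  set vvec : Fin n → ℝ := fun i : Fin n => v ((i:ℕ)+1) with hvvec
  set F : Finset (Fin n → ℝ) := (Finset.range (l+1)).image (xv10 n) with hF
  have hclosed : IsClosed (convexHull ℝ (F : Set (Fin n → ℝ))) :=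
    (F.finite_toSet.isCompact_convexHull (𝕜 := ℝ)).isClosed
  obtain ⟨f, u, hfv, hfb⟩ :=
    geometric_hahn_banach_point_closed (convex_convexHull ℝ _) hclosed hmem
  -- basis expansion of f
  have hf : ∀ y : Fin n → ℝ, f y = ∑ i, y i * f (fun j => if i = j then 1 else 0) := by
    intro y
    conv_lhs => rw [pi_eq_sum_univ y, map_sum]
    exact Finset.sum_congr rfl (fun i _ => by rw [f.map_smul]; rfl)
  set g : ℕ → ℝ := fun k => if h : k - 1 < n then
      f (fun j => if (⟨k-1, h⟩ : Fin n) = j then 1 else 0) else 0 with hg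
  have hgf : ∀ i : Fin n, g ((i:ℕ)+1) = f (fun j => if i = j then 1 else 0) := by
    intro i
    have h : ((i:ℕ)+1) - 1 < n := by simp
    simp only [hg]
    rw [dif_pos h]
    have he : (⟨(i:ℕ)+1-1, h⟩ : Fin n) = i := by ext; simp
    rw [he]
  set Q : ℝ[X] := C (-u) + ∑ k ∈ Finset.Icc 1 n, C (g k) * X^k with hQ
  have hQc0 : Q.coeff 0 = -u := by
    rw [hQ, coeff_add, coeff_C, if_pos rfl, finset_sum_coeff]
    have : ∀ k ∈ Finset.Icc 1 n, (C (g k) * X^k).coeff 0 = 0 := by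
      intro k hk
      rw [coeff_C_mul, coeff_X_pow, if_neg (by simp at hk; omega), mul_zero]
    rw [Finset.sum_congr rfl this]
    simp
  have hQck : ∀ k ∈ Finset.Icc 1 n, Q.coeff k = g k := by
    intro k hk
    have hk1 : 1 ≤ k := by simp at hk; omega
    rw [hQ, coeff_add, coeff_C, if_neg (by omega), finset_sum_coeff, zero_add]
    rw [Finset.sum_eq_single_of_mem k hk]
    · rw [coeff_C_mul, coeff_X_pow, if_pos rfl, mul_one]
    · intro b hb hbk
      rw [coeff_C_mul, coeff_X_pow, if_neg (fun h => hbk h.symm), mul_zero]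
  have hQdeg : Q.natDegree ≤ n := by
    apply le_trans (natDegree_add_le _ _)
    simp only [natDegree_C, sup_le_iff]
    refine ⟨by omega, natDegree_sum_le_of_forall_le _ _ (fun k hk => ?_)⟩
    exact le_trans (natDegree_C_mul_le _ _) (by rw [natDegree_X_pow]; simp at hk; omega)
  have hQeval : ∀ m : ℕ, Q.eval (m:ℝ) = -u + f (xv10 n m) := by
    intro m
    rw [hQ, eval_add, eval_C, eval_finset_sum]
    congr 1
    have : ∀ k ∈ Finset.Icc 1 n, (C (g k) * X^k).eval (m:ℝ) = g k * (m:ℝ)^k := by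
      intro k _; simp
    rw [Finset.sum_congr rfl this, icc_sum10, hf (xv10 n m)]
    apply Finset.sum_congr rfl
    intro i _
    rw [hgf i, xv10]
    ring
  have hQpair : pair10 n v Q < 0 := by
    have : pair10 n v Q = -u + f vvec := by
      rw [pair10, hQc0]
      rw [Finset.sum_congr rfl (fun k hk => by rw [hQck k hk])]
      rw [icc_sum10 n (fun k => g k * v k), hf vvec]
      have : ∀ i : Fin n, g ((i:ℕ)+1) * v ((i:ℕ)+1) = vvec i * f (fun j => if i = j then 1 else 0) := by
        intro i; rw [hgf i, hvvec]; ring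
      rw [Finset.sum_congr rfl (fun i _ => this i)]
    rw [this]
    linarith
  have hQpos : ∀ m ≤ l, 0 ≤ Q.eval (m:ℝ) := by
    intro m hm
    rw [hQeval]
    have hmemF : xv10 n m ∈ (F : Set (Fin n → ℝ)) := by
      simp only [hF, Finset.coe_image, Set.mem_image]
      exact ⟨m, by simp [Nat.lt_succ_iff, hm], rfl⟩
    have := hfb _ (subset_convexHull ℝ _ hmemF)
    linarith
  exact main10 n l hn hnl v hRHS n Q hQdeg hQpos hQpair (Nat.le_add_right n _)

lemma meas10 (n l : ℕ) (hn : 1 ≤ n) (v : ℕ → ℝ)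
    (hmem : (fun i : Fin n => v ((i:ℕ)+1)) ∈
      convexHull ℝ (((Finset.range (l+1)).image (xv10 n) : Finset (Fin n → ℝ)) : Set (Fin n → ℝ))) :
    ∃ κ : Measure ℕ, IsProbabilityMeasure κ ∧ (∀ m, l < m → κ {m} = 0) ∧
        ∀ k, 1 ≤ k → k ≤ n →
          v k = ∑' m : ℕ, (κ {m}).toReal * (m : ℝ) ^ k := by
  classical
  rw [Finset.convexHull_eq] at hmem
  obtain ⟨w, hw0, hw1, hwc⟩ := hmem
  have hxinj : ∀ x ∈ Finset.range (l+1), ∀ y ∈ Finset.range (l+1),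
      xv10 n x = xv10 n y → x = y := by
    intro x _ y _ h
    have := congrFun h ⟨0, hn⟩
    simp only [xv10] at this
    have h2 : (x:ℝ) = (y:ℝ) := by
      have := this
      simpa using this
    exact_mod_cast h2
  set p : ℕ → ℝ := fun m => if m ≤ l then w (xv10 n m) else 0 with hp
  have hp0 : ∀ m, 0 ≤ p m := by
    intro m
    rw [hp]
    dsimp only
    split
    · exact hw0 _ (Finset.mem_image_of_mem _ (by simp; omega))
    · exact le_refl 0
  have hpeq : ∀ m ∈ Finset.range (l+1), p m = w (xv10 n m) := by
    intro m hm
    simp only [hp, if_pos (Nat.lt_succ_iff.1 (Finset.mem_range.1 hm))]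
  have hsum1 : ∑ m ∈ Finset.range (l+1), p m = 1 := by
    rw [Finset.sum_congr rfl hpeq, ← Finset.sum_image hxinj, hw1]
  have hvec : (fun i : Fin n => v ((i:ℕ)+1)) = ∑ m ∈ Finset.range (l+1), p m • xv10 n m := by
    rw [← hwc, Finset.centerMass_eq_of_sum_1 _ id hw1]
    rw [Finset.sum_image hxinj]
    exact (Finset.sum_congr rfl (fun m hm => by rw [hpeq m hm, id])).symm
  have hcoord : ∀ k, 1 ≤ k → k ≤ n →
      v k = ∑ m ∈ Finset.range (l+1), p m * (m:ℝ)^k := by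
    intro k hk1 hkn
    have hik : k - 1 < n := by omega
    have := congrFun hvec ⟨k-1, hik⟩
    simp only [Finset.sum_apply, Pi.smul_apply, xv10, smul_eq_mul] at this
    have hk' : k - 1 + 1 = k := by omega
    rw [hk'] at this
    exact this
  set κ : Measure ℕ := ∑ m ∈ Finset.range (l+1), ENNReal.ofReal (p m) • Measure.dirac m with hκ
  have hκj : ∀ j : ℕ, κ {j} = if j ≤ l then ENNReal.ofReal (p j) else 0 := by
    intro j
    rw [hκ, Measure.finset_sum_apply]
    have hterm : ∀ m ∈ Finset.range (l+1),
        (ENNReal.ofReal (p m) • Measure.dirac m) {j} = if m = j then ENNReal.ofReal (p m) else 0 := by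
      intro m _
      rw [Measure.smul_apply, Measure.dirac_apply, Set.indicator_apply]
      by_cases h : m = j
      · simp [h]
      · simp [h, Set.mem_singleton_iff]
    rw [Finset.sum_congr rfl hterm, Finset.sum_ite_eq' (Finset.range (l+1)) j
      (fun m => ENNReal.ofReal (p m))]
    simp [Nat.lt_succ_iff]
  refine ⟨κ, ?_, ?_, ?_⟩
  · constructor
    rw [hκ, Measure.finset_sum_apply]
    have hterm : ∀ m ∈ Finset.range (l+1),
        (ENNReal.ofReal (p m) • Measure.dirac m) Set.univ = ENNReal.ofReal (p m) := by
      intro m _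
      rw [Measure.smul_apply]
      simp
    rw [Finset.sum_congr rfl hterm, ← ENNReal.ofReal_sum_of_nonneg (fun m _ => hp0 m), hsum1,
      ENNReal.ofReal_one]
  · intro m hm
    rw [hκj m, if_neg (by omega)]
  · intro k hk1 hkn
    rw [hcoord k hk1 hkn]
    rw [tsum_eq_sum (s := Finset.range (l+1)) (fun m hm => by
      rw [hκj m, if_neg (by simp at hm; omega)]; simp)]
    apply Finset.sum_congr rfl
    intro m hm
    rw [hκj m, if_pos (by simp at hm; omega), ENNReal.toReal_ofReal (hp0 m)]

lemma fwd10 (n l : ℕ) (hn : 1 ≤ n) (hnl : n ≤ l) (v : ℕ → ℝ)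
    (κ : Measure ℕ) (hκ : IsProbabilityMeasure κ) (hκ0 : ∀ m, l < m → κ {m} = 0)
    (hκv : ∀ k, 1 ≤ k → k ≤ n → v k = ∑' m : ℕ, (κ {m}).toReal * (m : ℝ) ^ k) :
    ∀ P : Polynomial ℝ, P.natDegree = n →
          (∃ S : Finset ℕ, S ⊆ Finset.range (l + 1) ∧ S.card = n ∧
            P.roots = S.val.map (fun i => (i : ℝ))) →
          (∀ i ≤ l, 0 ≤ P.eval (i : ℝ)) →
          0 ≤ P.coeff 0 + ∑ i ∈ Finset.Icc 1 n, P.coeff i * v i := by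
  intro P hPdeg _ hPpos
  classical
  set p : ℕ → ℝ := fun m => (κ {m}).toReal with hp
  have hp0 : ∀ m, 0 ≤ p m := fun m => ENNReal.toReal_nonneg
  have hp_out : ∀ m, l < m → p m = 0 := fun m hm => by rw [hp]; simp [hκ0 m hm]
  have hsum1 : ∑ m ∈ Finset.range (l+1), p m = 1 := by
    have huniv : κ Set.univ = ∑' m : ℕ, κ {m} := by
      rw [← Set.iUnion_of_singleton ℕ]
      exact measure_iUnion (fun i j hij => by simp [Function.onFun, hij])
        (fun i => measurableSet_singleton i)
    have htsum : ∑' m : ℕ, κ {m} = ∑ m ∈ Finset.range (l+1), κ {m} :=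
      tsum_eq_sum (fun m hm => hκ0 m (by simp at hm; omega))
    have h1 : κ Set.univ = 1 := hκ.measure_univ
    have h2 : ∑ m ∈ Finset.range (l+1), κ {m} = 1 := by rw [← htsum, ← huniv, h1]
    have := congrArg ENNReal.toReal h2
    rw [ENNReal.toReal_sum (fun m _ => measure_ne_top κ _)] at this
    simpa using this
  have hvk : ∀ k, 1 ≤ k → k ≤ n → v k = ∑ m ∈ Finset.range (l+1), p m * (m:ℝ)^k := by
    intro k hk1 hkn
    rw [hκv k hk1 hkn]
    exact tsum_eq_sum (fun m hm => by
      rw [hκ0 m (by simp at hm; omega)]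
      simp)
  -- rewrite the evaluation
  have heval : ∀ m : ℕ, P.eval (m:ℝ) = P.coeff 0 + ∑ k ∈ Finset.Icc 1 n, P.coeff k * (m:ℝ)^k := by
    intro m
    rw [eval_eq_sum_range, hPdeg]
    rw [← Finset.add_sum_erase _ _ (Finset.mem_range.2 (by omega : 0 < n + 1))]
    congr 1
    · simp
    · apply Finset.sum_congr
      · ext j
        simp [Nat.lt_succ_iff]
        omega
      · intro j _; rfl
  have key : P.coeff 0 + ∑ k ∈ Finset.Icc 1 n, P.coeff k * v k
      = ∑ m ∈ Finset.range (l+1), p m * P.eval (m:ℝ) := by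
    have h1 : ∑ k ∈ Finset.Icc 1 n, P.coeff k * v k
        = ∑ m ∈ Finset.range (l+1), p m * (∑ k ∈ Finset.Icc 1 n, P.coeff k * (m:ℝ)^k) := by
      rw [Finset.sum_congr rfl (fun k hk => by
        rw [hvk k (by simp at hk; omega) (by simp at hk; omega), Finset.mul_sum])]
      rw [Finset.sum_comm]
      apply Finset.sum_congr rfl
      intro m _
      rw [Finset.mul_sum]
      exact Finset.sum_congr rfl (fun k _ => by ring)
    rw [h1]
    have h2 : P.coeff 0 = ∑ m ∈ Finset.range (l+1), p m * P.coeff 0 := by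
      rw [← Finset.sum_mul, hsum1, one_mul]
    conv_lhs => rw [h2]
    rw [← Finset.sum_add_distrib]
    apply Finset.sum_congr rfl
    intro m _
    rw [heval m]
    ring
  rw [key]
  apply Finset.sum_nonneg
  intro m hm
  exact mul_nonneg (hp0 m) (hPpos m (by simp at hm; omega))


theorem stmt_10 (n l : ℕ) (hn : 1 ≤ n) (hnl : n ≤ l) (v : ℕ → ℝ) :
    (∃ κ : Measure ℕ, IsProbabilityMeasure κ ∧ (∀ m, l < m → κ {m} = 0) ∧
        ∀ k, 1 ≤ k → k ≤ n →
          v k = ∑' m : ℕ, (κ {m}).toReal * (m : ℝ) ^ k)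
      ↔ (∀ P : Polynomial ℝ, P.natDegree = n →
          (∃ S : Finset ℕ, S ⊆ Finset.range (l + 1) ∧ S.card = n ∧
            P.roots = S.val.map (fun i => (i : ℝ))) →
          (∀ i ≤ l, 0 ≤ P.eval (i : ℝ)) →
          0 ≤ P.coeff 0 + ∑ i ∈ Finset.Icc 1 n, P.coeff i * v i) := by
  constructor
  · rintro ⟨κ, hκ, hκ0, hκv⟩
    exact fwd10 n l hn hnl v κ hκ hκ0 hκv
  · intro hRHS
    exact meas10 n l hn v (sep10 n l hn hnl v hRHS)
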